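/- Let M be the generalized map Witt algebra over a unital commutative algebra A with A⊗A an integral domain. If c ∈ M⊗M⊗M satisfies a·c = 0 for all a ∈ M under the diagonal adjoint action, then c = 0. -/

import Mathlib

open Finsupp TensorProduct

/-- Bracket of the generalized map Witt algebra `[L_α x, L_β y] = (β−α)L_{α+β}(xy)`,
as a bilinear map on `M = W(Γ) ⊗ A = Γ →₀ A`. -/
noncomputable def bkM {F : Type*} [Field F] (Γ : AddSubgroup F)
    (A : Type*) [CommRing A] [Algebra F A] :
    (Γ →₀ A) →ₗ[F] (Γ →₀ A) →ₗ[F] (Γ →₀ A) :=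
  Finsupp.lsum F fun α =>
    (Finsupp.lsum (R := F) (S := F) (M := A) (N := (Γ →₀ A))).toLinearMap.comp
      (LinearMap.pi fun β : Γ =>
        ((β : F) - (α : F)) •
          ((LinearMap.llcomp F A A (Γ →₀ A) (Finsupp.lsingle (α + β))).comp
            (LinearMap.mul F A)))

/-- Diagonal adjoint action of `M` on `M ⊗ M`. -/
noncomputable def actM {F : Type*} [Field F] (Γ : AddSubgroup F)
    (A : Type*) [CommRing A] [Algebra F A] (x : Γ →₀ A) :
    ((Γ →₀ A) ⊗[F] (Γ →₀ A)) →ₗ[F] ((Γ →₀ A) ⊗[F] (Γ →₀ A)) :=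
  LinearMap.rTensor _ (bkM Γ A x) + LinearMap.lTensor _ (bkM Γ A x)

/-- Diagonal adjoint action of `M` on `M ⊗ M ⊗ M`. -/
noncomputable def actM3 {F : Type*} [Field F] (Γ : AddSubgroup F)
    (A : Type*) [CommRing A] [Algebra F A] (x : Γ →₀ A) :
    ((Γ →₀ A) ⊗[F] ((Γ →₀ A) ⊗[F] (Γ →₀ A))) →ₗ[F]
      ((Γ →₀ A) ⊗[F] ((Γ →₀ A) ⊗[F] (Γ →₀ A))) :=
  LinearMap.rTensor _ (bkM Γ A x) + LinearMap.lTensor _ (actM Γ A x)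

noncomputable instance instZeroTensorM3 {F : Type*} [Field F] (Γ : AddSubgroup F)
    (A : Type*) [CommRing A] [Algebra F A] :
    Zero ((Γ →₀ A) ⊗[F] ((Γ →₀ A) ⊗[F] (Γ →₀ A))) :=
  ⟨(inferInstance : AddCommMonoid ((Γ →₀ A) ⊗[F] ((Γ →₀ A) ⊗[F] (Γ →₀ A)))).zero⟩

section Aux

variable {F : Type*} [Field F] {Γ : AddSubgroup F}

section Single

variable {V : Type*} [AddCommGroup V] [Module F V]

lemma witt_aux1 (s α β γ p1 p2 p3 : Γ) (v : V) :
    ((α : F) - (s : F)) • (Finsupp.single ((s + α : Γ), β, γ) v) (p1, p2, p3)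
      = ((p1 : F) - 2 * (s : F)) • (Finsupp.single (α, β, γ) v) (p1 - s, p2, p3) := by
  classical
  rcases eq_or_ne (s + α) p1 with h | h
  · subst h
    simp only [Finsupp.single_apply, add_sub_cancel_left, Prod.mk.injEq, true_and]
    split_ifs with h'
    · have : ((s + α : Γ) : F) = (s : F) + (α : F) := rfl
      rw [this]; module
    · simp
  · rw [Finsupp.single_apply, if_neg, Finsupp.single_apply, if_neg, smul_zero, smul_zero]
    · intro heq
      apply h
      have : α = p1 - s := (Prod.ext_iff.1 heq).1
      rw [this]; abel
    · intro heq
      exact h (Prod.ext_iff.1 heq).1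

lemma witt_aux2 (s α β γ p1 p2 p3 : Γ) (v : V) :
    ((β : F) - (s : F)) • (Finsupp.single (α, (s + β : Γ), γ) v) (p1, p2, p3)
      = ((p2 : F) - 2 * (s : F)) • (Finsupp.single (α, β, γ) v) (p1, p2 - s, p3) := by
  classical
  rcases eq_or_ne (s + β) p2 with h | h
  · subst h
    simp only [Finsupp.single_apply, add_sub_cancel_left, Prod.mk.injEq, true_and]
    split_ifs with h'
    · have : ((s + β : Γ) : F) = (s : F) + (β : F) := rfl
      rw [this]; module
    · simp
  · rw [Finsupp.single_apply, if_neg, Finsupp.single_apply, if_neg, smul_zero, smul_zero]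
    · intro heq
      simp only [Prod.mk.injEq] at heq
      apply h
      rw [heq.2.1]; abel
    · intro heq
      simp only [Prod.mk.injEq] at heq
      exact h heq.2.1

lemma witt_aux3 (s α β γ p1 p2 p3 : Γ) (v : V) :
    ((γ : F) - (s : F)) • (Finsupp.single (α, β, (s + γ : Γ)) v) (p1, p2, p3)
      = ((p3 : F) - 2 * (s : F)) • (Finsupp.single (α, β, γ) v) (p1, p2, p3 - s) := by
  classical
  rcases eq_or_ne (s + γ) p3 with h | h
  · subst h
    simp only [Finsupp.single_apply, add_sub_cancel_left, Prod.mk.injEq, true_and]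
    split_ifs with h'
    · have : ((s + γ : Γ) : F) = (s : F) + (γ : F) := rfl
      rw [this]; module
    · simp
  · rw [Finsupp.single_apply, if_neg, Finsupp.single_apply, if_neg, smul_zero, smul_zero]
    · intro heq
      simp only [Prod.mk.injEq] at heq
      apply h
      rw [heq.2.2]; abel
    · intro heq
      simp only [Prod.mk.injEq] at heq
      exact h heq.2.2

end Single

variable (Γ) (A : Type*) [CommRing A] [Algebra F A]

lemma bkM_single (α β : Γ) (x y : A) :
    bkM Γ A (Finsupp.single α x) (Finsupp.single β y)
      = ((β : F) - (α : F)) • Finsupp.single (α + β) (x * y) := by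
  simp [bkM]

/-- The triple tensor power of `M` as a finsupp on `Γ³`. -/
noncomputable def eM :
    ((Γ →₀ A) ⊗[F] ((Γ →₀ A) ⊗[F] (Γ →₀ A))) ≃ₗ[F]
      ((Γ × Γ × Γ) →₀ (A ⊗[F] (A ⊗[F] A))) :=
  (TensorProduct.congr (LinearEquiv.refl F (Γ →₀ A)) (finsuppTensorFinsupp F F A A Γ Γ)) ≪≫ₗ
    finsuppTensorFinsupp F F A (A ⊗[F] A) Γ (Γ × Γ)

@[simp] lemma eM_single (α β γ : Γ) (x y z : A) :
    eM Γ A (Finsupp.single α x ⊗ₜ (Finsupp.single β y ⊗ₜ Finsupp.single γ z))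
      = Finsupp.single (α, β, γ) (x ⊗ₜ (y ⊗ₜ z)) := by
  simp [eM]

/-- Key formula: action of `L_s 1` in graded coordinates. -/
lemma eM_actM3_single_one (s : Γ) (c : (Γ →₀ A) ⊗[F] ((Γ →₀ A) ⊗[F] (Γ →₀ A)))
    (p : Γ × Γ × Γ) :
    eM Γ A (actM3 Γ A (Finsupp.single s 1) c) p
      = ((p.1 : F) - 2 * (s : F)) • (eM Γ A c) (p.1 - s, p.2.1, p.2.2)
      + ((p.2.1 : F) - 2 * (s : F)) • (eM Γ A c) (p.1, p.2.1 - s, p.2.2)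
      + ((p.2.2 : F) - 2 * (s : F)) • (eM Γ A c) (p.1, p.2.1, p.2.2 - s) := by
  obtain ⟨p1, p2, p3⟩ := p
  have := LinearMap.congr_fun (f := (Finsupp.lapply (R := F) (p1, p2, p3)).comp
      ((eM Γ A).toLinearMap.comp (actM3 Γ A (Finsupp.single s 1))))
    (g := ((p1 : F) - 2 * (s : F)) • ((Finsupp.lapply (p1 - s, p2, p3)).comp (eM Γ A).toLinearMap)
      + ((p2 : F) - 2 * (s : F)) • ((Finsupp.lapply (p1, p2 - s, p3)).comp (eM Γ A).toLinearMap)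
      + ((p3 : F) - 2 * (s : F)) • ((Finsupp.lapply (p1, p2, p3 - s)).comp (eM Γ A).toLinearMap))
    ?_ c
  · exact this
  ext α x β y γ z
  simp only [LinearMap.coe_comp, Function.comp_apply, TensorProduct.AlgebraTensorModule.curry_apply,
    TensorProduct.curry_apply, LinearMap.coe_restrictScalars, Finsupp.lsingle_apply,
    LinearMap.add_apply, LinearMap.smul_apply, LinearEquiv.coe_coe, Finsupp.lapply_apply]
  rw [actM3, actM]
  simp only [LinearMap.add_apply, LinearMap.rTensor_tmul, LinearMap.lTensor_tmul, bkM_single,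
    one_mul, TensorProduct.smul_tmul', TensorProduct.smul_tmul, TensorProduct.tmul_add]
  rw [map_add, map_add]
  simp only [TensorProduct.tmul_smul, (eM Γ A).map_smul, eM_single,
    Finsupp.add_apply, Finsupp.smul_apply]
  rw [← add_assoc]
  congr 1
  congr 1
  · exact witt_aux1 s α β γ p1 p2 p3 _
  · exact witt_aux2 s α β γ p1 p2 p3 _
  · exact witt_aux3 s α β γ p1 p2 p3 _

lemma smul_cancel_of_ne_zero {F V : Type*} [Field F] [AddCommGroup V] [Module F V]
    {r : F} {v : V} (hr : r ≠ 0) (h : r • v = 0) : v = 0 := by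
  have h2 := congrArg (fun w => r⁻¹ • w) h
  simpa only [smul_smul, inv_mul_cancel₀ hr, one_smul, smul_zero] using h2

end Aux

/-- if `A ⊗ A` is an integral domain, the `M`-invariants of
`M ⊗ M ⊗ M` vanish, where `M = W(Γ) ⊗ A` is the generalized map Witt algebra. -/
theorem map_witt_triple_tensor_invariants_zero
    {F : Type*} [Field F] [CharZero F] (Γ : AddSubgroup F) (h1 : (1 : F) ∈ Γ)
    (A : Type*) [CommRing A] [Algebra F A] [IsDomain (A ⊗[F] A)]
    (c : (Γ →₀ A) ⊗[F] ((Γ →₀ A) ⊗[F] (Γ →₀ A)))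
    (hc : ∀ a : Γ →₀ A, actM3 Γ A a c = 0) :
    c = 0 := by
  classical
  set g := eM Γ A c with hg
  -- the finite sets of "bad" scalars
  set S1 : Finset F := g.support.image (fun p => (p.1 : F)) with hS1
  set D2 : Finset F := (g.support ×ˢ g.support).image
    (fun q => (q.1.2.1 : F) - (q.2.2.1 : F)) with hD2
  set D3 : Finset F := (g.support ×ˢ g.support).image
    (fun q => (q.1.2.2 : F) - (q.2.2.2 : F)) with hD3
  have hbad : ∃ n : ℕ, (n : F) ∉ S1 ∪ D2 ∪ D3 := by
    by_contra hcon
    push_neg at hcon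
    have hsub : Set.range (Nat.cast : ℕ → F) ⊆ ↑(S1 ∪ D2 ∪ D3) := by
      rintro _ ⟨n, rfl⟩
      exact hcon n
    exact (Set.infinite_range_of_injective Nat.cast_injective)
      ((S1 ∪ D2 ∪ D3).finite_toSet.subset hsub)
  obtain ⟨n, hn⟩ := hbad
  rw [Finset.mem_union, not_or, Finset.mem_union, not_or] at hn
  obtain ⟨⟨hn1, hn2⟩, hn3⟩ := hn
  have hsmem : ((n : F)) ∈ Γ := by
    have := AddSubgroup.nsmul_mem Γ h1 n
    simpa [nsmul_eq_mul] using this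
  set s : Γ := ⟨(n : F), hsmem⟩ with hs
  have hsF : (s : F) = (n : F) := rfl
  -- the invariance equation
  have heq : ∀ p : Γ × Γ × Γ,
      ((p.1 : F) - 2 * (s : F)) • g (p.1 - s, p.2.1, p.2.2)
      + ((p.2.1 : F) - 2 * (s : F)) • g (p.1, p.2.1 - s, p.2.2)
      + ((p.2.2 : F) - 2 * (s : F)) • g (p.1, p.2.1, p.2.2 - s) = 0 := by
    intro p
    have h0 : actM3 Γ A (Finsupp.single s 1) c
        = (0 : (Γ →₀ A) ⊗[F] ((Γ →₀ A) ⊗[F] (Γ →₀ A))) := hc _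
    have hkey := eM_actM3_single_one Γ A s c p
    rw [h0] at hkey
    have hz : eM Γ A (0 : (Γ →₀ A) ⊗[F] ((Γ →₀ A) ⊗[F] (Γ →₀ A))) = 0 :=
      (eM Γ A).map_zero
    rw [hz] at hkey
    rw [← hg] at hkey
    simpa using hkey.symm
  -- show every coefficient vanishes
  have hzero : ∀ p : Γ × Γ × Γ, g p = 0 := by
    intro p
    by_contra hp
    have hpmem : p ∈ g.support := Finsupp.mem_support_iff.2 hp
    obtain ⟨p1, p2, p3⟩ := p
    have := heq (p1 + s, p2, p3)
    simp only [add_sub_cancel_right] at this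
    have h2 : g (p1 + s, p2 - s, p3) = 0 := by
      by_contra hq
      apply hn2
      rw [hD2]
      apply Finset.mem_image.2
      refine ⟨((p1, p2, p3), (p1 + s, p2 - s, p3)), Finset.mem_product.2
        ⟨hpmem, Finsupp.mem_support_iff.2 hq⟩, ?_⟩
      have : ((p2 - s : Γ) : F) = (p2 : F) - (s : F) := rfl
      simp [this, hsF]
    have h3 : g (p1 + s, p2, p3 - s) = 0 := by
      by_contra hq
      apply hn3
      rw [hD3]
      apply Finset.mem_image.2
      refine ⟨((p1, p2, p3), (p1 + s, p2, p3 - s)), Finset.mem_product.2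
        ⟨hpmem, Finsupp.mem_support_iff.2 hq⟩, ?_⟩
      have : ((p3 - s : Γ) : F) = (p3 : F) - (s : F) := rfl
      simp [this, hsF]
    rw [h2, h3, smul_zero, smul_zero, add_zero, add_zero] at this
    have hcoe : ((p1 + s : Γ) : F) = (p1 : F) + (s : F) := rfl
    have hcoeff : ((p1 + s : Γ) : F) - 2 * (s : F) ≠ 0 := by
      rw [hcoe]
      intro habs
      apply hn1
      rw [hS1]
      apply Finset.mem_image.2
      refine ⟨(p1, p2, p3), hpmem, ?_⟩
      have hps : (p1 : F) = (s : F) := by linear_combination habs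
      exact hps.trans hsF
    exact hp (smul_cancel_of_ne_zero hcoeff this)
  exact (LinearEquiv.map_eq_zero_iff (eM Γ A)).1 (Finsupp.ext hzero)
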